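/- For all real a > 0 and b ∈ ℝ, an antiderivative of x ↦ Φ(a√x + b/√x) on (0,∞) is given by G(x) = (1/(2a²))·e^{−a|b| − ab}·(−a|b| + ab − 1)·Φ(a√x − |b|/√x) + (1/(2a²))·e^{a|b| − ab}·(a|b| + ab − 1)·(Φ(a√x + |b|/√x) − 1) + (|b|/(2a))·e^{−a|b| − ab} + x·Φ(a√x + b/√x) + (√x/(a√(2π)))·e^{−(a√x + b/√x)²/2}. -/

import Mathlib

open MeasureTheory Real

/-- Standard normal cumulative distribution function. -/
noncomputable def Phi (x : ℝ) : ℝ :=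
  ∫ u in Set.Iic x, Real.exp (-u ^ 2 / 2) / Real.sqrt (2 * Real.pi)

lemma gauss_integrable : MeasureTheory.Integrable (fun u : ℝ => Real.exp (-u ^ 2 / 2) / Real.sqrt (2 * Real.pi)) := by
  have h : MeasureTheory.Integrable (fun u : ℝ => Real.exp (-(1/2) * u ^ 2)) :=
    integrable_exp_neg_mul_sq (by norm_num)
  have := h.div_const (Real.sqrt (2 * Real.pi))
  convert this using 2 with u
  ring_nf

lemma hasDerivAt_Phi (y : ℝ) :
    HasDerivAt Phi (Real.exp (-y ^ 2 / 2) / Real.sqrt (2 * Real.pi)) y := by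
  have hint := gauss_integrable
  have hcont : Continuous (fun u : ℝ => Real.exp (-u ^ 2 / 2) / Real.sqrt (2 * Real.pi)) := by
    fun_prop
  have key : ∀ z : ℝ, Phi z = Phi 0 + ∫ u in (0:ℝ)..z, Real.exp (-u ^ 2 / 2) / Real.sqrt (2 * Real.pi) := by
    intro z
    have h2 := intervalIntegral.integral_Iic_sub_Iic (hint.integrableOn) (hint.integrableOn) (a := 0) (b := z)
    unfold Phi
    linarith [h2]
  have hd : HasDerivAt (fun z => Phi 0 + ∫ u in (0:ℝ)..z, Real.exp (-u ^ 2 / 2) / Real.sqrt (2 * Real.pi))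
      (Real.exp (-y ^ 2 / 2) / Real.sqrt (2 * Real.pi)) y :=
    (intervalIntegral.integral_hasDerivAt_right (hint.intervalIntegrable)
      (hcont.stronglyMeasurableAtFilter _ _) hcont.continuousAt).const_add _
  exact hd.congr_of_eventuallyEq (Filter.Eventually.of_forall key)

theorem stmt_9 (a b : ℝ) (ha : 0 < a) (x : ℝ) (hx : 0 < x) :
    HasDerivAt (fun x : ℝ =>
        (1 / (2 * a ^ 2)) * Real.exp (-(a * |b|) - a * b) * (-(a * |b|) + a * b - 1) *
            Phi (a * Real.sqrt x - |b| / Real.sqrt x)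
          + (1 / (2 * a ^ 2)) * Real.exp (a * |b| - a * b) * (a * |b| + a * b - 1) *
            (Phi (a * Real.sqrt x + |b| / Real.sqrt x) - 1)
          + (|b| / (2 * a)) * Real.exp (-(a * |b|) - a * b)
          + x * Phi (a * Real.sqrt x + b / Real.sqrt x)
          + (Real.sqrt x / (a * Real.sqrt (2 * Real.pi))) *
            Real.exp (-(a * Real.sqrt x + b / Real.sqrt x) ^ 2 / 2))
      (Phi (a * Real.sqrt x + b / Real.sqrt x)) x := by
  have hQ : (0:ℝ) < Real.sqrt (2 * Real.pi) := Real.sqrt_pos.2 (by positivity)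
  simp only [div_eq_mul_inv]
  set s := Real.sqrt x with hs_def
  have hs0 : 0 < s := Real.sqrt_pos.2 hx
  have hsx : s ^ 2 = x := Real.sq_sqrt hx.le
  have hsqrt : HasDerivAt Real.sqrt (1 / (2 * s)) x := Real.hasDerivAt_sqrt hx.ne'
  have hinv : HasDerivAt (fun y => (Real.sqrt y)⁻¹) (-(1 / (2 * s)) / s ^ 2) x :=
    hsqrt.inv hs0.ne'
  have hv : HasDerivAt (fun y => a * Real.sqrt y - |b| * (Real.sqrt y)⁻¹)
      (a * (1 / (2 * s)) - |b| * (-(1 / (2 * s)) / s ^ 2)) x :=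
    (hsqrt.const_mul a).sub (hinv.const_mul |b|)
  have hw : HasDerivAt (fun y => a * Real.sqrt y + |b| * (Real.sqrt y)⁻¹)
      (a * (1 / (2 * s)) + |b| * (-(1 / (2 * s)) / s ^ 2)) x :=
    (hsqrt.const_mul a).add (hinv.const_mul |b|)
  have hu : HasDerivAt (fun y => a * Real.sqrt y + b * (Real.sqrt y)⁻¹)
      (a * (1 / (2 * s)) + b * (-(1 / (2 * s)) / s ^ 2)) x :=
    (hsqrt.const_mul a).add (hinv.const_mul b)
  have hPv := (hasDerivAt_Phi (a * s - |b| * s⁻¹)).comp x hv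
  have hPw := (hasDerivAt_Phi (a * s + |b| * s⁻¹)).comp x hw
  have hPu := (hasDerivAt_Phi (a * s + b * s⁻¹)).comp x hu
  have hT1 := hPv.const_mul (1 * (2 * a ^ 2)⁻¹ * Real.exp (-(a * |b|) - a * b) * (-(a * |b|) + a * b - 1))
  have hT2 := (hPw.sub_const 1).const_mul (1 * (2 * a ^ 2)⁻¹ * Real.exp (a * |b| - a * b) * (a * |b| + a * b - 1))
  have hexp : HasDerivAt (fun y => Real.exp (-(a * Real.sqrt y + b * (Real.sqrt y)⁻¹) ^ 2 * 2⁻¹))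
      (Real.exp (-(a * s + b * s⁻¹) ^ 2 * 2⁻¹) *
        (-((2:ℕ) * (a * s + b * s⁻¹) ^ 1 * (a * (1 / (2 * s)) + b * (-(1 / (2 * s)) / s ^ 2))) * 2⁻¹)) x :=
    (((hu.pow 2).neg).mul_const 2⁻¹).exp
  have hT4 := (hasDerivAt_id' (x := x)).mul hPu
  have hT5 := (hsqrt.mul_const (a * Real.sqrt (2 * Real.pi))⁻¹).mul hexp
  have hF := (((hT1.add hT2).add_const
      (|b| * (2 * a)⁻¹ * Real.exp (-(a * |b|) - a * b))).add hT4).add hT5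
  convert hF using 1
  case e'_4 => rfl
  case e'_5 => rfl
  case e'_8 => rfl
  rcases abs_choice b with hb | hb <;> rw [hb] <;>
      simp only [Function.comp_apply, div_eq_mul_inv, pow_one] <;> rw [← hs_def, ← hsx]
  · have hE : Real.exp (-(a * s - b * s⁻¹) ^ 2 * 2⁻¹) =
        Real.exp (-(a * s + b * s⁻¹) ^ 2 * 2⁻¹) * Real.exp (2 * (a * b)) := by
      rw [← Real.exp_add]
      congr 1
      field_simp
      ring
    rw [hE, show -(a * b) - a * b = -(2 * (a * b)) by ring, Real.exp_neg, sub_self,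
      Real.exp_zero]
    push_cast
    field_simp
    ring
  · have hE : Real.exp (-(a * s - b * s⁻¹) ^ 2 * 2⁻¹) =
        Real.exp (-(a * s + b * s⁻¹) ^ 2 * 2⁻¹) * Real.exp (2 * (a * b)) := by
      rw [← Real.exp_add]
      congr 1
      field_simp
      ring
    rw [show a * s - -b * s⁻¹ = a * s + b * s⁻¹ by ring,
      show a * s + -b * s⁻¹ = a * s - b * s⁻¹ by ring, hE,
      show -(a * -b) - a * b = 0 by ring, Real.exp_zero,
      show a * -b - a * b = -(2 * (a * b)) by ring, Real.exp_neg]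
    push_cast
    field_simp
    ring
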